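/- The infimum over all real x, y, z of the ratio (x²−x+1)(y²−y+1)(z²−z+1) / ((xyz)² − xyz + 1) equals the unique real root of k² + 6k − 3 = 0 lying in the interval (1/4, 1/2), i.e., −3 + 2√3. -/
import Mathlib

set_option maxHeartbeats 2000000

private lemma fpos (w : ℝ) : 0 < w ^ 2 - w + 1 := by nlinarith [sq_nonneg (2 * w - 1)]

/-- the key two-variable identity-based bound -/
private lemma claim1 (x y : ℝ) :
    3 / 4 * (x * y - 1) ^ 2 ≤ (x ^ 2 - x + 1) * (y ^ 2 - y + 1) := by
  nlinarith [sq_nonneg (x + y - (x * y + 1) / 2)]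

/-- replacing a same-sign pair by its geometric mean in the "inner" region -/
private lemma pairin (x y g : ℝ) (hg0 : 0 ≤ g) (hg : g ^ 2 = x * y) (h2g : 2 * g ≤ x + y)
    (hreg : (x * y) ^ 2 - 14 * (x * y) + 1 < 0) :
    (g ^ 2 - g + 1) ^ 2 ≤ (x ^ 2 - x + 1) * (y ^ 2 - y + 1) := by
  have hreg' : (g ^ 2) ^ 2 - 14 * g ^ 2 + 1 < 0 := by rw [hg]; exact hreg
  have h4 : g ^ 2 + 1 ≤ 4 * g := by nlinarith [sq_nonneg g, hg0]
  have key : (x ^ 2 - x + 1) * (y ^ 2 - y + 1) - (g ^ 2 - g + 1) ^ 2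
      = (x + y - 2 * g) * (x + y + 2 * g - g ^ 2 - 1) := by
    linear_combination (1 + x + y - x * y - g ^ 2) * hg
  have hprod := mul_nonneg (by linarith : (0:ℝ) ≤ x + y - 2 * g)
    (by linarith : (0:ℝ) ≤ x + y + 2 * g - g ^ 2 - 1)
  linarith [key, hprod]

/-- the tight two-variable core inequality: `k·f(g²z) ≤ f(g)²·f(z)` -/
private lemma core2 (s g z : ℝ) (hs : s ^ 2 = 3) (h1 : (1.7320:ℝ) < s) (h2 : s < 1.7321) :
    (2 * s - 3) * ((g ^ 2 * z) ^ 2 - g ^ 2 * z + 1) ≤ (g ^ 2 - g + 1) ^ 2 * (z ^ 2 - z + 1) := by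
  have hf : (3:ℝ) / 4 ≤ g ^ 2 - g + 1 := by nlinarith [sq_nonneg (2 * g - 1)]
  have hfg : (3:ℝ) / 4 * g ^ 2 ≤ g ^ 2 - g + 1 := by nlinarith [sq_nonneg (g - 2)]
  have h916 : (9:ℝ) / 16 * g ^ 4 ≤ (g ^ 2 - g + 1) ^ 2 := by
    nlinarith [hfg, hf, sq_nonneg g, mul_nonneg (by linarith : (0:ℝ) ≤ g ^ 2 - g + 1 - 3 / 4 * g ^ 2)
      (by nlinarith [sq_nonneg (2 * g - 1), sq_nonneg g] : (0:ℝ) ≤ g ^ 2 - g + 1 + 3 / 4 * g ^ 2)]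
  have ha : 0 < (g ^ 2 - g + 1) ^ 2 - (2 * s - 3) * g ^ 4 := by
    nlinarith [h916, hf, sq_nonneg (g ^ 2 - g + 1 - 3 / 4),
      mul_nonneg (by linarith : (0:ℝ) ≤ 4642 / 10000 - (2 * s - 3)) (sq_nonneg (g ^ 2))]
  have hfact : 4 * ((g ^ 2 - g + 1) ^ 2 - (2 * s - 3) * g ^ 4) * ((g ^ 2 - g + 1) ^ 2 - (2 * s - 3))
      - ((g ^ 2 - g + 1) ^ 2 - (2 * s - 3) * g ^ 2) ^ 2
      = (g ^ 2 - (1 + s) * g + 1) ^ 2 *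
        ((15 - 8 * s) * (g ^ 2 + (3 * s - 15) / 11 * g + 1) ^ 2 + (120 - 68 * s) / 11 * g ^ 2) := by
    linear_combination ((-128/11)*g + (5470/121)*g^2 + (-16/121)*g^2*s + (-10940/121)*g^3
      + (-1008/121)*g^3*s + (384/121)*g^3*s^2 + (12505/121)*g^4 + (2444/121)*g^4*s
      + (-711/121)*g^4*s^2 + (72/121)*g^4*s^3 + (-10940/121)*g^5 + (-1008/121)*g^5*s
      + (384/121)*g^5*s^2 + (5470/121)*g^6 + (-16/121)*g^6*s + (-128/11)*g^7) * hs
  have hR1 : (0:ℝ) ≤ 15 - 8 * s := by linarith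
  have hR2 : (0:ℝ) ≤ (120 - 68 * s) / 11 := by linarith
  have hΔ : 0 ≤ 4 * ((g ^ 2 - g + 1) ^ 2 - (2 * s - 3) * g ^ 4) * ((g ^ 2 - g + 1) ^ 2 - (2 * s - 3))
      - ((g ^ 2 - g + 1) ^ 2 - (2 * s - 3) * g ^ 2) ^ 2 := by
    rw [hfact]
    exact mul_nonneg (sq_nonneg _)
      (add_nonneg (mul_nonneg hR1 (sq_nonneg _)) (mul_nonneg hR2 (sq_nonneg _)))
  nlinarith [ha, hΔ, sq_nonneg (2 * ((g ^ 2 - g + 1) ^ 2 - (2 * s - 3) * g ^ 4) * z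
    - ((g ^ 2 - g + 1) ^ 2 - (2 * s - 3) * g ^ 2))]

/-- the outer-region inequality: on `u² − 14u + 1 ≥ 0`, `k·f(uz) ≤ (3/4)(u−1)²·f(z)` -/
private lemma outer (s u z : ℝ) (hs : s ^ 2 = 3) (h1 : (1.7320:ℝ) < s) (h2 : s < 1.7321)
    (hu : 0 ≤ u ^ 2 - 14 * u + 1) :
    (2 * s - 3) * ((u * z) ^ 2 - u * z + 1) ≤ 3 / 4 * (u - 1) ^ 2 * (z ^ 2 - z + 1) := by
  have ha : 0 < 3 / 4 * (u - 1) ^ 2 - (2 * s - 3) * u ^ 2 := by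
    nlinarith [hu, sq_nonneg (5 * u - 7),
      mul_nonneg (by linarith : (0:ℝ) ≤ 17321 / 10000 * 2 - 2 * s) (sq_nonneg u)]
  have hμ : 0 ≤ 1 / 10 * (u ^ 2 + 1) + (7379 / 100 - 213 / 5 * s) * u := by
    rcases le_or_gt 0 u with h | h
    · nlinarith [mul_nonneg (by linarith : (0:ℝ) ≤ 7379 / 100 - 213 / 5 * s) h, sq_nonneg u]
    · nlinarith [mul_nonneg (by linarith : (0:ℝ) ≤ 1 / 5 - (7379 / 100 - 213 / 5 * s))
        (by linarith : (0:ℝ) ≤ -u), sq_nonneg (u + 1)]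
  have hfact : 4 * (3 / 4 * (u - 1) ^ 2 - (2 * s - 3) * u ^ 2) * (3 / 4 * (u - 1) ^ 2 - (2 * s - 3))
      - (3 / 4 * (u - 1) ^ 2 - (2 * s - 3) * u) ^ 2
      = (1 / 10 * (u ^ 2 + 1) + (7379 / 100 - 213 / 5 * s) * u) * (u ^ 2 - 14 * u + 1)
        + (847 / 80 - 6 * s) * (u ^ 2 - 24 / 5 * u + 1) ^ 2
        + (433937 / 500 - 12504 / 25 * s) * u ^ 2 := by
    linear_combination (12 * u ^ 2) * hs
  have hΔ : 0 ≤ 4 * (3 / 4 * (u - 1) ^ 2 - (2 * s - 3) * u ^ 2) * (3 / 4 * (u - 1) ^ 2 - (2 * s - 3))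
      - (3 / 4 * (u - 1) ^ 2 - (2 * s - 3) * u) ^ 2 := by
    rw [hfact]
    have e1 := mul_nonneg hμ hu
    have e2 := mul_nonneg (by linarith : (0:ℝ) ≤ 847 / 80 - 6 * s) (sq_nonneg (u ^ 2 - 24 / 5 * u + 1))
    have e3 := mul_nonneg (by linarith : (0:ℝ) ≤ 433937 / 500 - 12504 / 25 * s) (sq_nonneg u)
    linarith
  nlinarith [ha, hΔ, sq_nonneg (2 * (3 / 4 * (u - 1) ^ 2 - (2 * s - 3) * u ^ 2) * z
    - (3 / 4 * (u - 1) ^ 2 - (2 * s - 3) * u))]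

/-- the main lower bound -/
private lemma keyineq (s x y z : ℝ) (hs : s ^ 2 = 3) (h1 : (1.7320:ℝ) < s) (h2 : s < 1.7321) :
    (2 * s - 3) * ((x * y * z) ^ 2 - x * y * z + 1)
      ≤ (x ^ 2 - x + 1) * (y ^ 2 - y + 1) * (z ^ 2 - z + 1) := by
  rcases le_or_gt 0 ((x * y) ^ 2 - 14 * (x * y) + 1) with hreg | hreg
  · have hout := outer s (x * y) z hs h1 h2 hreg
    have hc := claim1 x y
    have hfz := (fpos z).le
    nlinarith [mul_le_mul_of_nonneg_right hc hfz]
  · have hu : 0 < x * y := by nlinarith [sq_nonneg (x * y)]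
    have hpair : (Real.sqrt (x * y) ^ 2 - Real.sqrt (x * y) + 1) ^ 2
        ≤ (x ^ 2 - x + 1) * (y ^ 2 - y + 1) := by
      set g := Real.sqrt (x * y) with hgdef
      have hg0 : 0 ≤ g := Real.sqrt_nonneg _
      have hg : g ^ 2 = x * y := Real.sq_sqrt hu.le
      rcases lt_trichotomy x 0 with hx | hx | hx
      · have hy : y < 0 := by
          rcases lt_trichotomy y 0 with h | h | h
          · exact h
          · exfalso; rw [h] at hu; simp at hu
          · exfalso; nlinarith
        have hg' : g ^ 2 = (-x) * (-y) := by rw [hg]; ring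
        have h2g : 2 * g ≤ (-x) + (-y) := by
          have hx' : 0 < -x := by linarith
          have hy' : 0 < -y := by linarith
          have : g = Real.sqrt (-x) * Real.sqrt (-y) := by
            rw [hgdef, show x * y = (-x) * (-y) by ring, Real.sqrt_mul hx'.le]
          nlinarith [sq_nonneg (Real.sqrt (-x) - Real.sqrt (-y)), Real.sq_sqrt hx'.le,
            Real.sq_sqrt hy'.le, this]
        have hreg' : ((-x) * (-y)) ^ 2 - 14 * ((-x) * (-y)) + 1 < 0 := by
          rw [show (-x) * (-y) = x * y by ring]; exact hreg
        have := pairin (-x) (-y) g hg0 hg' h2g hreg'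
        nlinarith [this, mul_nonneg (fpos (-x)).le (by linarith : (0:ℝ) ≤ -2 * y),
          mul_nonneg (by linarith : (0:ℝ) ≤ -2 * x) (fpos y).le]
      · exfalso; rw [hx] at hu; simp at hu
      · have hy : 0 < y := by nlinarith
        have h2g : 2 * g ≤ x + y := by
          have : g = Real.sqrt x * Real.sqrt y := by rw [hgdef, Real.sqrt_mul hx.le]
          nlinarith [sq_nonneg (Real.sqrt x - Real.sqrt y), Real.sq_sqrt hx.le,
            Real.sq_sqrt hy.le, this]
        exact pairin x y g hg0 hg h2g hreg
    set g := Real.sqrt (x * y)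
    have hg : g ^ 2 = x * y := Real.sq_sqrt hu.le
    have hcore := core2 s g z hs h1 h2
    have hxyz : g ^ 2 * z = x * y * z := by rw [hg]
    rw [hxyz] at hcore
    have hfz := (fpos z).le
    nlinarith [mul_le_mul_of_nonneg_right hpair hfz, hcore]

private lemma sqrt3_lb : (1.7320:ℝ) < Real.sqrt 3 := by
  have h := Real.sq_sqrt (by norm_num : (3:ℝ) ≥ 0)
  nlinarith [Real.sqrt_nonneg 3]

private lemma sqrt3_ub : Real.sqrt 3 < 1.7321 := by
  have h := Real.sq_sqrt (by norm_num : (3:ℝ) ≥ 0)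
  nlinarith [Real.sqrt_nonneg 3]

/-- the infimum over all real `x, y, z` of
`(x²−x+1)(y²−y+1)(z²−z+1) / ((xyz)² − xyz + 1)` equals `2√3 − 3`, the unique real root
of `k² + 6k − 3 = 0` lying in `(1/4, 1/2)`. -/
theorem stmt_19 :
    IsGLB {r : ℝ | ∃ x y z : ℝ,
        r = ((x ^ 2 - x + 1) * (y ^ 2 - y + 1) * (z ^ 2 - z + 1)) /
              ((x * y * z) ^ 2 - x * y * z + 1)}
      (2 * Real.sqrt 3 - 3) ∧
    (2 * Real.sqrt 3 - 3) ^ 2 + 6 * (2 * Real.sqrt 3 - 3) - 3 = 0 ∧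
    (2 * Real.sqrt 3 - 3) ∈ Set.Ioo (1 / 4 : ℝ) (1 / 2) := by
  set s := Real.sqrt 3 with hsdef
  have hs : s ^ 2 = 3 := Real.sq_sqrt (by norm_num)
  have h1 : (1.7320:ℝ) < s := sqrt3_lb
  have h2 : s < 1.7321 := sqrt3_ub
  have hmem : (2 * s - 3) ∈ {r : ℝ | ∃ x y z : ℝ,
      r = ((x ^ 2 - x + 1) * (y ^ 2 - y + 1) * (z ^ 2 - z + 1)) /
            ((x * y * z) ^ 2 - x * y * z + 1)} := by
    have hr0 : (0:ℝ) ≤ 2 * s := by linarith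
    set r := Real.sqrt (2 * s) with hrdef
    have hr : r ^ 2 = 2 * s := Real.sq_sqrt hr0
    refine ⟨(1 + s + r) / 2, (1 + s + r) / 2, (1 + s + r) / 2, ?_⟩
    set t := (1 + s + r) / 2 with htdef
    have hD : (t * t * t) ^ 2 - t * t * t + 1 ≠ 0 := (fpos (t * t * t)).ne'
    rw [eq_div_iff hD]
    have goal : (2 * s - 3) * ((t * t * t) ^ 2 - t * t * t + 1)
        = (t ^ 2 - t + 1) * (t ^ 2 - t + 1) * (t ^ 2 - t + 1) := by
      rw [htdef]
      linear_combination (-((117/32)*s + (97/16)*s^2 + (-1/8)*s^3 + (-15/8)*s^4 + (-15/32)*s^5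
        + (9/16)*r + (57/16)*r*s + (21/16)*r*s^2 + (-1)*r*s^3 + (-5/8)*r*s^4
        + (27/32)*r^2 + (17/16)*r^2*s + (-1/16)*r^2*s^2 + (-15/32)*r^2*s^3
        + (9/32)*r^3 + (3/16)*r^3*s + (-3/16)*r^3*s^2 + (1/16)*r^4 + (-1/32)*r^4*s)) * hr
        + (-((-33/32) + (7/8)*s + (-95/32)*s^2 + (-129/32)*s^3 + (-17/16)*s^4 + (-1/32)*s^5
        + (9/32)*r + (-9/16)*r*s + (-97/32)*r*s^2 + (-29/16)*r*s^3 + (-3/16)*r*s^4)) * hs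
    linarith [goal]
  refine ⟨⟨?_, ?_⟩, ?_, ?_, ?_⟩
  · rintro w ⟨x, y, z, rfl⟩
    rw [le_div_iff₀ (fpos (x * y * z))]
    exact keyineq s x y z hs h1 h2
  · intro b hb
    exact hb hmem
  · linear_combination 4 * hs
  · show (1:ℝ)/4 < 2 * s - 3
    linarith
  · show 2 * s - 3 < (1:ℝ)/2
    linarith
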